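/- Let m, k be positive integers and c > 0. If x is a vector of dimension k with sum of components |x| ≥ mc, then Σ_{r=1}^{k} (m^r / r!) Σ_{u_1 ⊔ ⋯ ⊔ u_r = x} 𝔏_c(u_1) ⋯ 𝔏_c(u_r) = 0, where the inner sum runs over all r^k decompositions of x into an ordered r-tuple of (possibly empty) subvectors. -/

import Mathlib

open scoped Classical

/-- The truncated Linnik function `𝔏_c(x)` (with `𝔏_c(∅) = 0`): the sum over `j ≥ 1` of
`(-1)^(j+1)/j` times the number of decompositions of `x` into an ordered `j`-tuple of
nonempty disjoint subvectors with each block-sum `< c`. -/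
noncomputable def LinnikOn (c : ℝ) {ι : Type*} [Fintype ι] (x : ι → ℝ) : ℝ :=
  ∑ j ∈ Finset.Icc 1 (Fintype.card ι),
    ((-1 : ℝ) ^ (j + 1) / (j : ℝ)) *
      (Nat.card {π : ι → Fin j // Function.Surjective π ∧
        ∀ i : Fin j, (∑ a ∈ Finset.univ.filter (fun a => π a = i), x a) < c} : ℝ)

open Finset

noncomputable def cj (j : ℕ) : ℝ := (-1 : ℝ) ^ (j + 1) / (j : ℝ)

def SurjSmall (c : ℝ) {ι : Type*} [Fintype ι] (x : ι → ℝ) (β : Type*) [Fintype β] : Type _ :=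
  {γ : ι → β // Function.Surjective γ ∧
    ∀ b : β, (∑ a ∈ Finset.univ.filter (fun a => γ a = b), x a) < c}

instance SurjSmall.finite (c : ℝ) {ι : Type*} [Fintype ι] (x : ι → ℝ) (β : Type*) [Fintype β] :
    Finite (SurjSmall c x β) := by
  unfold SurjSmall; infer_instance

lemma linnikOn_def (c : ℝ) {ι : Type*} [Fintype ι] (x : ι → ℝ) :
    LinnikOn c x = ∑ j ∈ Finset.Icc 1 (Fintype.card ι),
      cj j * (Nat.card (SurjSmall c x (Fin j)) : ℝ) := by
  unfold LinnikOn SurjSmall cj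
  congr!

lemma surjSmall_card_congr (c : ℝ) {ι : Type*} [Fintype ι] (x : ι → ℝ)
    {β β' : Type*} [Fintype β] [Fintype β'] (e : β ≃ β') :
    Nat.card (SurjSmall c x β) = Nat.card (SurjSmall c x β') := by
  refine Nat.card_congr ⟨fun γ => ⟨fun a => e (γ.1 a), ?_, ?_⟩,
    fun γ => ⟨fun a => e.symm (γ.1 a), ?_, ?_⟩, ?_, ?_⟩
  · exact e.surjective.comp γ.2.1
  · intro b
    have : (Finset.univ.filter (fun a => e (γ.1 a) = b)) =
        (Finset.univ.filter (fun a => γ.1 a = e.symm b)) := by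
      apply Finset.filter_congr; intro a _; simp [Equiv.eq_symm_apply]
    rw [this]; exact γ.2.2 _
  · exact e.symm.surjective.comp γ.2.1
  · intro b
    have : (Finset.univ.filter (fun a => e.symm (γ.1 a) = b)) =
        (Finset.univ.filter (fun a => γ.1 a = e b)) := by
      apply Finset.filter_congr; intro a _; simp [Equiv.symm_apply_eq]
    rw [this]; exact γ.2.2 _
  · intro γ; apply Subtype.ext; funext a; simp
  · intro γ; apply Subtype.ext; funext a; simp

lemma surjSmall_card_zero (c : ℝ) {ι : Type*} [Fintype ι] (x : ι → ℝ)
    {β : Type*} [Fintype β] (h : Fintype.card ι < Fintype.card β) :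
    Nat.card (SurjSmall c x β) = 0 := by
  have : IsEmpty (SurjSmall c x β) := by
    constructor; rintro ⟨γ, hs, -⟩
    exact absurd (Fintype.card_le_of_surjective γ hs) (by omega)
  exact Nat.card_of_isEmpty

lemma linnikOn_eq (c : ℝ) {ι : Type*} [Fintype ι] (x : ι → ℝ) (K : ℕ)
    (hK : Fintype.card ι ≤ K) :
    LinnikOn c x = ∑ j ∈ Finset.Icc 1 K, cj j * (Nat.card (SurjSmall c x (Fin j)) : ℝ) := by
  rw [linnikOn_def]
  apply Finset.sum_subset
  · intro j hj; simp only [Finset.mem_Icc] at *; omega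
  · intro j hj hj'
    simp only [Finset.mem_Icc, not_and, not_le] at hj hj'
    rw [surjSmall_card_zero c x (by simpa using hj' hj.1), Nat.cast_zero, mul_zero]

lemma nat_card_sigma {ι : Type*} [Fintype ι] (β : ι → Type*) [∀ i, Finite (β i)] :
    Nat.card ((i : ι) × β i) = ∑ i, Nat.card (β i) := by
  have : ∀ i, Fintype (β i) := fun i => Fintype.ofFinite _
  simp [Nat.card_eq_fintype_card, Fintype.card_sigma]

lemma sum_filter_subtype_eq {ι : Type*} [Fintype ι] (x : ι → ℝ) (p : ι → Prop)
    [instp : Fintype {a // p a}] (C : {a // p a} → Prop) [instC : DecidablePred C]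
    (q : ι → Prop) [instq : DecidablePred q]
    (hpq : ∀ a, q a → p a) (hCq : ∀ a : {a // p a}, C a ↔ q a.1) :
    (∑ a ∈ Finset.univ.filter C, x a.1) = ∑ a ∈ Finset.univ.filter q, x a := by
  refine Finset.sum_bij' (fun (a : {a // p a}) _ => a.1)
    (fun a ha => ⟨a, hpq a (by simpa using ha)⟩) ?_ ?_ ?_ ?_ ?_
  case refine_1 => intro a ha; simp only [Finset.mem_filter, Finset.mem_univ, true_and]
                   exact (hCq a).mp (by simpa using ha)
  case refine_2 => intro a ha; simp only [Finset.mem_filter, Finset.mem_univ, true_and]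
                   exact (hCq _).mpr (by simpa using ha)
  case refine_3 => intro a ha; rfl
  case refine_4 => intro a ha; rfl
  case refine_5 => intro a ha; rfl

section Decomp
variable (c : ℝ) {ι : Type*} [Fintype ι] (x : ι → ℝ) {r : ℕ} (g : Fin r → ℕ)

lemma key_iff {g : Fin r → ℕ} (b : (i : Fin r) × Fin (g i)) (i : Fin r) (h : b.1 = i)
    (t : Fin (g i)) : Fin.cast (congrArg g h) b.2 = t ↔ b = ⟨i, t⟩ := by
  subst h
  simp [Fin.cast, Sigma.ext_iff]

noncomputable def decompEquiv : SurjSmall c x ((i : Fin r) × Fin (g i)) ≃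
    Σ π : ι → Fin r, ∀ i, SurjSmall c (fun a : {a : ι // π a = i} => x a.1) (Fin (g i)) where
  toFun γ := ⟨fun a => (γ.1 a).1, fun i =>
    ⟨fun a => Fin.cast (congrArg g a.2) (γ.1 a.1).2, by
      constructor
      · -- surjective
        intro t
        obtain ⟨a, ha⟩ := γ.2.1 ⟨i, t⟩
        exact ⟨⟨a, congrArg Sigma.fst ha⟩,
          (key_iff (γ.1 a) i (congrArg Sigma.fst ha) t).mpr ha⟩
      · -- small
        intro t
        refine lt_of_eq_of_lt ?_ (γ.2.2 ⟨i, t⟩)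
        exact @sum_filter_subtype_eq ι _ x (fun a : ι => (γ.1 a).1 = i) _
            (fun a => Fin.cast (congrArg g a.2) (γ.1 a.1).2 = t)
            (fun a => Classical.propDecidable _)
            (fun a : ι => γ.1 a = ⟨i, t⟩) (fun a => Classical.propDecidable _)
            (fun a ha => congrArg Sigma.fst ha)
            (fun a => key_iff (γ.1 a.1) i a.2 t)⟩⟩
  invFun p := ⟨fun a => ⟨p.1 a, (p.2 (p.1 a)).1 ⟨a, rfl⟩⟩, by
    constructor
    · rintro ⟨i, t⟩
      obtain ⟨⟨a, ha⟩, ha0⟩ := (p.2 i).2.1 t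
      subst ha
      exact ⟨a, congrArg (Sigma.mk _) ha0⟩
    · rintro ⟨i, t⟩
      have key : ∀ a : {a : ι // p.1 a = i},
          ((p.2 i).1 a = t ↔
            (⟨p.1 a.1, (p.2 (p.1 a.1)).1 ⟨a.1, rfl⟩⟩ : (i : Fin r) × Fin (g i)) = ⟨i, t⟩) := by
        rintro ⟨a, h⟩
        subst h
        simp [Sigma.ext_iff]
      refine lt_of_eq_of_lt (Eq.symm ?_) ((p.2 i).2.2 t)
      exact @sum_filter_subtype_eq ι _ x (fun a : ι => p.1 a = i) _
          (fun a => (p.2 i).1 a = t) (fun a => Classical.propDecidable _)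
          (fun a : ι =>
            (⟨p.1 a, (p.2 (p.1 a)).1 ⟨a, rfl⟩⟩ : (i : Fin r) × Fin (g i)) = ⟨i, t⟩)
          (fun a => Classical.propDecidable _)
          (fun a ha => congrArg Sigma.fst ha)
          key⟩
  left_inv γ := Subtype.ext (funext fun a => rfl)
  right_inv p := by
    obtain ⟨π, σ⟩ := p
    refine Sigma.ext rfl (heq_of_eq ?_)
    funext i
    apply Subtype.ext
    funext a
    obtain ⟨a', h⟩ := a
    subst h
    rfl

end Decomp


section Cards
variable (c : ℝ) {ι : Type*} [Fintype ι] [DecidableEq ι] (x : ι → ℝ)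

lemma card_decomp {r : ℕ} (g : Fin r → ℕ) :
    Nat.card (SurjSmall c x ((i : Fin r) × Fin (g i))) =
      ∑ π : ι → Fin r, ∏ i : Fin r,
        Nat.card (SurjSmall c (fun a : {a : ι // π a = i} => x a.1) (Fin (g i))) := by
  rw [Nat.card_congr (decompEquiv c x g), nat_card_sigma]
  congr 1
  funext π
  rw [Nat.card_pi]

lemma card_decomp_fin {r : ℕ} (g : Fin r → ℕ) :
    ∑ π : ι → Fin r, ∏ i : Fin r,
        Nat.card (SurjSmall c (fun a : {a : ι // π a = i} => x a.1) (Fin (g i)))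
      = Nat.card (SurjSmall c x (Fin (∑ i, g i))) := by
  rw [← card_decomp]
  exact surjSmall_card_congr c x
    (Fintype.equivOfCardEq (by simp [Fintype.card_sigma])).symm

lemma inner_sum_linnik {r : ℕ} (K : ℕ) (hK : Fintype.card ι ≤ K) :
    ∑ π : ι → Fin r, ∏ i : Fin r, LinnikOn c (fun a : {a : ι // π a = i} => x a.1)
      = ∑ g ∈ Fintype.piFinset (fun _ : Fin r => Finset.Icc 1 K),
          (∏ i, cj (g i)) * (Nat.card (SurjSmall c x (Fin (∑ i, g i))) : ℝ) := by
  have h1 : ∀ π : ι → Fin r, ∀ i : Fin r,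
      LinnikOn c (fun a : {a : ι // π a = i} => x a.1)
        = ∑ j ∈ Finset.Icc 1 K, cj j *
            (Nat.card (SurjSmall c (fun a : {a : ι // π a = i} => x a.1) (Fin j)) : ℝ) := by
    intro π i
    exact linnikOn_eq c _ K (le_trans (Fintype.card_subtype_le _) hK)
  calc ∑ π : ι → Fin r, ∏ i : Fin r, LinnikOn c (fun a : {a : ι // π a = i} => x a.1)
      = ∑ π : ι → Fin r, ∑ g ∈ Fintype.piFinset (fun _ : Fin r => Finset.Icc 1 K),
          ∏ i : Fin r, (cj (g i) *
            (Nat.card (SurjSmall c (fun a : {a : ι // π a = i} => x a.1) (Fin (g i))) : ℝ)) := by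
        refine Finset.sum_congr rfl fun π _ => ?_
        exact (Finset.prod_congr rfl fun i _ => h1 π i).trans (Finset.prod_univ_sum _ _)
    _ = ∑ g ∈ Fintype.piFinset (fun _ : Fin r => Finset.Icc 1 K),
          (∏ i, cj (g i)) * ∑ π : ι → Fin r, ∏ i : Fin r,
            ((Nat.card (SurjSmall c (fun a : {a : ι // π a = i} => x a.1) (Fin (g i))) : ℝ)) := by
        rw [Finset.sum_comm]
        refine Finset.sum_congr rfl fun g _ => ?_
        rw [Finset.mul_sum]
        refine Finset.sum_congr rfl fun π _ => ?_
        rw [Finset.prod_mul_distrib]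
    _ = ∑ g ∈ Fintype.piFinset (fun _ : Fin r => Finset.Icc 1 K),
          (∏ i, cj (g i)) * (Nat.card (SurjSmall c x (Fin (∑ i, g i))) : ℝ) := by
        refine Finset.sum_congr rfl fun g _ => ?_
        congr 1
        push_cast [← card_decomp_fin c x g]
        rfl

end Cards

noncomputable def Ecomp (N n r : ℕ) : ℝ :=
  ∑ g ∈ (Fintype.piFinset (fun _ : Fin r => Finset.Icc 1 N)).filter
      (fun g => ∑ i, g i = n), ∏ i, cj (g i)

lemma Ecomp_zero (N n : ℕ) : Ecomp N n 0 = if n = 0 then 1 else 0 := by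
  unfold Ecomp
  rcases eq_or_ne n 0 with h | h
  · subst h
    rw [if_pos rfl, Finset.filter_true_of_mem (fun g _ => by simp)]
    rw [Finset.sum_congr rfl (fun g _ => Finset.prod_of_isEmpty _)]
    rw [Finset.sum_const, nsmul_eq_mul, mul_one]
    simp [Fintype.card_piFinset]
  · rw [if_neg h, Finset.filter_false_of_mem (fun g _ => by simp [Ne.symm h]), Finset.sum_empty]

lemma Ecomp_trunc (N M n r : ℕ) (hN : n ≤ N) (hM : n ≤ M) :
    Ecomp N n r = Ecomp M n r := by
  unfold Ecomp
  congr 1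
  ext g
  simp only [Finset.mem_filter, Fintype.mem_piFinset, Finset.mem_Icc]
  constructor <;> rintro ⟨h1, h2⟩ <;> refine ⟨fun i => ⟨(h1 i).1, ?_⟩, h2⟩
  · calc g i ≤ ∑ i', g i' := Finset.single_le_sum (fun _ _ => Nat.zero_le _) (Finset.mem_univ i)
    _ = n := h2
    _ ≤ M := hM
  · calc g i ≤ ∑ i', g i' := Finset.single_le_sum (fun _ _ => Nat.zero_le _) (Finset.mem_univ i)
    _ = n := h2
    _ ≤ N := hN

lemma Ecomp_eq_zero (N n r : ℕ) (h : n < r) : Ecomp N n r = 0 := by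
  unfold Ecomp
  apply Finset.sum_eq_zero
  intro g hg
  exfalso
  simp only [Finset.mem_filter, Fintype.mem_piFinset, Finset.mem_Icc] at hg
  have : r ≤ ∑ i, g i := by
    calc r = ∑ _i : Fin r, 1 := by simp
    _ ≤ ∑ i, g i := Finset.sum_le_sum (fun i _ => (hg.1 i).1)
  omega

lemma cj_mul (j : ℕ) (hj : 1 ≤ j) : (j : ℝ) * cj j = (-1 : ℝ) ^ (j + 1) := by
  unfold cj
  field_simp

-- splitting off the first coordinate
lemma Ecomp_split (n r : ℕ) (F : (Fin (r + 1) → ℕ) → ℝ) :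
    ∑ g ∈ (Fintype.piFinset (fun _ : Fin (r+1) => Finset.Icc 1 n)).filter
        (fun g => ∑ i, g i = n), F g
      = ∑ j ∈ Finset.Icc 1 n,
          ∑ g' ∈ (Fintype.piFinset (fun _ : Fin r => Finset.Icc 1 n)).filter
            (fun g' => ∑ i, g' i = n - j), F (Fin.cons j g') := by
  rw [Finset.sum_sigma']
  refine Finset.sum_bij' (fun g _ => (⟨g 0, Fin.tail g⟩ : Σ _j : ℕ, (Fin r → ℕ)))
    (fun p _ => Fin.cons p.1 p.2) ?_ ?_ ?_ ?_ ?_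
  · intro g hg
    simp only [Finset.mem_filter, Fintype.mem_piFinset, Finset.mem_Icc] at hg
    have hsum := hg.2
    rw [Fin.sum_univ_succ] at hsum
    simp only [Finset.mem_sigma, Finset.mem_filter, Fintype.mem_piFinset, Finset.mem_Icc]
    refine ⟨⟨(hg.1 0).1, (hg.1 0).2⟩, fun i => hg.1 i.succ, ?_⟩
    simp only [Fin.tail]
    omega
  · intro p hp
    simp only [Finset.mem_sigma, Finset.mem_filter, Fintype.mem_piFinset, Finset.mem_Icc] at hp
    simp only [Finset.mem_filter, Fintype.mem_piFinset, Finset.mem_Icc]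
    obtain ⟨hj, hg', hs⟩ := hp
    constructor
    · intro i
      refine Fin.cases ?_ ?_ i
      · simpa using hj
      · intro i'; simpa using hg' i'
    · rw [Fin.sum_univ_succ]
      simp only [Fin.cons_zero, Fin.cons_succ]
      omega
  · intro g hg
    simp [Fin.cons_self_tail]
  · intro p hp
    simp [Fin.tail_cons]
  · intro g hg
    simp [Fin.cons_self_tail]

-- symmetry: the weight of any marked coordinate equals that of coordinate 0
lemma Ecomp_sym (n N r : ℕ) (i : Fin (r + 1)) :
    ∑ g ∈ (Fintype.piFinset (fun _ : Fin (r+1) => Finset.Icc 1 N)).filter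
        (fun g => ∑ i', g i' = n), ((g i : ℝ) * ∏ i', cj (g i'))
      = ∑ g ∈ (Fintype.piFinset (fun _ : Fin (r+1) => Finset.Icc 1 N)).filter
        (fun g => ∑ i', g i' = n), ((g 0 : ℝ) * ∏ i', cj (g i')) := by
  refine Finset.sum_bij' (fun g _ => g ∘ (Equiv.swap i 0))
    (fun g _ => g ∘ (Equiv.swap i 0)) ?_ ?_ ?_ ?_ ?_
  · intro g hg
    simp only [Finset.mem_filter, Fintype.mem_piFinset] at hg ⊢
    exact ⟨fun i' => hg.1 _, by
      simp only [Function.comp_apply]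
      rw [Equiv.sum_comp (Equiv.swap i 0) g]; exact hg.2⟩
  · intro g hg
    simp only [Finset.mem_filter, Fintype.mem_piFinset] at hg ⊢
    exact ⟨fun i' => hg.1 _, by
      simp only [Function.comp_apply]
      rw [Equiv.sum_comp (Equiv.swap i 0) g]; exact hg.2⟩
  · intro g hg; funext a; simp
  · intro g hg; funext a; simp
  · intro g hg
    simp only [Function.comp_apply, Equiv.swap_apply_right]
    rw [Equiv.prod_comp (Equiv.swap i 0) (fun a => cj (g a))]

-- marked recurrence
lemma Ecomp_rec (n r : ℕ) (hn : 1 ≤ n) :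
    (n : ℝ) * Ecomp n n (r + 1)
      = (r + 1 : ℝ) * ∑ j ∈ Finset.Icc 1 n, (-1 : ℝ) ^ (j + 1) * Ecomp n (n - j) r := by
  have step1 : (n : ℝ) * Ecomp n n (r + 1)
      = ∑ g ∈ (Fintype.piFinset (fun _ : Fin (r+1) => Finset.Icc 1 n)).filter
          (fun g => ∑ i', g i' = n), ((∑ i', (g i' : ℝ)) * ∏ i', cj (g i')) := by
    unfold Ecomp
    rw [Finset.mul_sum]
    refine Finset.sum_congr rfl fun g hg => ?_
    simp only [Finset.mem_filter] at hg
    congr 1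
    rw [← hg.2]
    push_cast
    rfl
  rw [step1]
  have step2 : ∑ g ∈ (Fintype.piFinset (fun _ : Fin (r+1) => Finset.Icc 1 n)).filter
          (fun g => ∑ i', g i' = n), ((∑ i', (g i' : ℝ)) * ∏ i', cj (g i'))
      = ∑ i' : Fin (r + 1),
          ∑ g ∈ (Fintype.piFinset (fun _ : Fin (r+1) => Finset.Icc 1 n)).filter
            (fun g => ∑ i'', g i'' = n), ((g i' : ℝ) * ∏ i'', cj (g i'')) := by
    rw [Finset.sum_comm]
    exact Finset.sum_congr rfl fun g _ => by rw [Finset.sum_mul]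
  rw [step2]
  have step3 : ∀ i' : Fin (r + 1),
      ∑ g ∈ (Fintype.piFinset (fun _ : Fin (r+1) => Finset.Icc 1 n)).filter
        (fun g => ∑ i'', g i'' = n), ((g i' : ℝ) * ∏ i'', cj (g i''))
      = ∑ g ∈ (Fintype.piFinset (fun _ : Fin (r+1) => Finset.Icc 1 n)).filter
        (fun g => ∑ i'', g i'' = n), ((g 0 : ℝ) * ∏ i'', cj (g i'')) :=
    fun i' => Ecomp_sym n n r i'
  rw [Finset.sum_congr rfl (fun i' _ => step3 i'), Finset.sum_const, Finset.card_univ,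
    Fintype.card_fin, nsmul_eq_mul]
  push_cast
  congr 1
  -- now split off the first coordinate
  rw [Ecomp_split n r (fun g => (g 0 : ℝ) * ∏ i'', cj (g i''))]
  refine Finset.sum_congr rfl fun j hj => ?_
  simp only [Finset.mem_Icc] at hj
  unfold Ecomp
  rw [Finset.mul_sum]
  refine Finset.sum_congr rfl fun g' hg' => ?_
  simp only [Fin.cons_zero]
  rw [Fin.prod_univ_succ]
  simp only [Fin.cons_zero, Fin.cons_succ]
  rw [← mul_assoc, cj_mul j hj.1]

lemma alt_sum_choose (m : ℕ) (hm : 1 ≤ m) :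
    ∀ n : ℕ, ∑ j ∈ Finset.Icc 1 (n+1), (-1:ℝ)^(j+1) * (m.choose (n+1-j) : ℝ)
      = ((m-1).choose n : ℝ) := by
  intro n
  induction n with
  | zero => simp
  | succ n ih =>
    have hsplit : Finset.Icc 1 (n+2) = insert 1 (Finset.Icc 2 (n+2)) := by
      ext j; simp only [Finset.mem_Icc, Finset.mem_insert]; omega
    rw [hsplit, Finset.sum_insert (by simp)]
    have hmap : Finset.Icc 2 (n+2) = Finset.map (addRightEmbedding 1) (Finset.Icc 1 (n+1)) := by
      rw [Finset.map_add_right_Icc]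
    rw [hmap, Finset.sum_map]
    have : ∀ j ∈ Finset.Icc 1 (n+1),
        (-1:ℝ)^((addRightEmbedding 1) j + 1) * (m.choose (n+2-((addRightEmbedding 1) j)) : ℝ)
          = -((-1:ℝ)^(j+1) * (m.choose (n+1-j) : ℝ)) := by
      intro j hj
      simp only [addRightEmbedding_apply]
      rw [show n+2-(j+1) = n+1-j from by omega, show j+1+1 = (j+1)+1 from rfl, pow_succ]
      ring
    rw [Finset.sum_congr rfl this, Finset.sum_neg_distrib, ih]
    have hpascal : (m.choose (n+1) : ℝ) = ((m-1).choose n : ℝ) + ((m-1).choose (n+1) : ℝ) := by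
      have h1 : m - 1 + 1 = m := by omega
      rw [← h1, Nat.choose_succ_succ]
      push_cast
      ring
    rw [show n+2-1 = n+1 from by omega, hpascal]
    norm_num

lemma B_eq_choose (m : ℕ) (hm : 1 ≤ m) (n : ℕ) :
    ∑ r ∈ Finset.range (n+1), ((m:ℝ)^r / (r.factorial : ℝ)) * Ecomp n n r
      = (m.choose n : ℝ) := by
  induction n using Nat.strong_induction_on with
  | _ n ih =>
    rcases Nat.eq_zero_or_pos n with hn | hn
    · subst hn
      simp [Ecomp_zero]
    · -- n ≥ 1
      have hne : (n : ℝ) ≠ 0 := by positivity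
      apply mul_left_cancel₀ hne
      have key : (n:ℝ) * ∑ r ∈ Finset.range (n+1), ((m:ℝ)^r / (r.factorial : ℝ)) * Ecomp n n r
          = (m:ℝ) * ∑ j ∈ Finset.Icc 1 n, (-1:ℝ)^(j+1) *
              (∑ r ∈ Finset.range ((n-j)+1), ((m:ℝ)^r / (r.factorial : ℝ)) * Ecomp (n-j) (n-j) r) := by
        rw [Finset.mul_sum]
        have h0 : ∀ r ∈ Finset.range (n+1),
            (n:ℝ) * (((m:ℝ)^r / (r.factorial : ℝ)) * Ecomp n n r)
              = ((m:ℝ)^r / (r.factorial : ℝ)) * ((n:ℝ) * Ecomp n n r) := fun r _ => by ring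
        rw [Finset.sum_congr rfl h0, Finset.sum_range_succ']
        have hz : ((m:ℝ)^0 / ((0:ℕ).factorial : ℝ)) * ((n:ℝ) * Ecomp n n 0) = 0 := by
          rw [Ecomp_zero, if_neg (by omega)]
          ring
        rw [hz, add_zero]
        have h1 : ∀ r ∈ Finset.range n,
            ((m:ℝ)^(r+1) / ((r+1).factorial : ℝ)) * ((n:ℝ) * Ecomp n n (r+1))
              = (m:ℝ) * (((m:ℝ)^r / (r.factorial : ℝ)) *
                  ∑ j ∈ Finset.Icc 1 n, (-1:ℝ)^(j+1) * Ecomp n (n-j) r) := by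
          intro r _
          rw [Ecomp_rec n r hn, Nat.factorial_succ]
          have : ((r+1).factorial : ℝ) ≠ 0 := by positivity
          have hr : (r.factorial : ℝ) ≠ 0 := by positivity
          field_simp
          push_cast
          ring
        rw [Finset.sum_congr rfl h1, ← Finset.mul_sum]
        congr 1
        rw [Finset.sum_congr rfl (fun r (_ : r ∈ Finset.range n) => Finset.mul_sum
          (Finset.Icc 1 n) (fun j => (-1:ℝ)^(j+1) * Ecomp n (n-j) r)
          ((m:ℝ)^r / (r.factorial : ℝ))), Finset.sum_comm]
        refine Finset.sum_congr rfl fun j hj => ?_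
        simp only [Finset.mem_Icc] at hj
        have h2 : ∀ r ∈ Finset.range n,
            ((m:ℝ)^r / (r.factorial : ℝ)) * ((-1:ℝ)^(j+1) * Ecomp n (n-j) r)
              = (-1:ℝ)^(j+1) * (((m:ℝ)^r / (r.factorial : ℝ)) * Ecomp (n-j) (n-j) r) := by
          intro r _
          rw [Ecomp_trunc n (n-j) (n-j) r (by omega) le_rfl]
          ring
        rw [Finset.sum_congr rfl h2, ← Finset.mul_sum]
        congr 1
        symm
        apply Finset.sum_subset
        · intro r hr; simp only [Finset.mem_range] at *; omega
        · intro r hr hr'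
          simp only [Finset.mem_range] at hr hr'
          rw [Ecomp_eq_zero _ _ _ (by omega)]
          ring
      rw [key]
      have hIH : ∀ j ∈ Finset.Icc 1 n,
          (-1:ℝ)^(j+1) * (∑ r ∈ Finset.range ((n-j)+1),
              ((m:ℝ)^r / (r.factorial : ℝ)) * Ecomp (n-j) (n-j) r)
            = (-1:ℝ)^(j+1) * ((m.choose (n-j) : ℝ)) := by
        intro j hj
        simp only [Finset.mem_Icc] at hj
        rw [ih (n-j) (by omega)]
      rw [Finset.sum_congr rfl hIH]
      obtain ⟨n', rfl⟩ : ∃ n', n = n' + 1 := ⟨n - 1, by omega⟩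
      rw [alt_sum_choose m hm n']
      have hm1 : m - 1 + 1 = m := by omega
      have hnat : m * ((m-1).choose n') = (n'+1) * (m.choose (n'+1)) := by
        have h := Nat.add_one_mul_choose_eq (m-1) n'
        rw [hm1] at h
        rw [h, Nat.mul_comm]
      exact_mod_cast hnat

def AllSmall (c : ℝ) {ι : Type*} [Fintype ι] (x : ι → ℝ) (β : Type*) [Fintype β] : Type _ :=
  {γ : ι → β // ∀ b : β, (∑ a ∈ Finset.univ.filter (fun a => γ a = b), x a) < c}

instance AllSmall.finite (c : ℝ) {ι : Type*} [Fintype ι] (x : ι → ℝ) (β : Type*) [Fintype β] :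
    Finite (AllSmall c x β) := by
  unfold AllSmall; infer_instance

lemma sigma_surj_eq (c : ℝ) {ι : Type*} [Fintype ι] (x : ι → ℝ) {m : ℕ}
    (T T' : Finset (Fin m)) (h : T = T')
    (u : SurjSmall c x {b // b ∈ T}) (u' : SurjSmall c x {b // b ∈ T'})
    (hval : ∀ a, (u.1 a).1 = (u'.1 a).1) :
    (⟨T, u⟩ : Σ T : Finset (Fin m), SurjSmall c x {b // b ∈ T}) = ⟨T', u'⟩ := by
  subst h
  exact congrArg _ (Subtype.ext (funext fun a => Subtype.ext (hval a)))

noncomputable def allSmallEquiv (c : ℝ) {ι : Type*} [Fintype ι] (x : ι → ℝ) (hc : 0 < c)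
    (m : ℕ) :
    AllSmall c x (Fin m) ≃ Σ T : Finset (Fin m), SurjSmall c x {b // b ∈ T} where
  toFun γ := ⟨Finset.image γ.1 Finset.univ,
    ⟨fun a => ⟨γ.1 a, Finset.mem_image_of_mem _ (Finset.mem_univ a)⟩, by
      constructor
      · rintro ⟨b, hb⟩
        obtain ⟨a, -, ha⟩ := Finset.mem_image.mp hb
        exact ⟨a, Subtype.ext ha⟩
      · intro b
        have hfe : @Finset.filter ι
              (fun a => (⟨γ.1 a, Finset.mem_image_of_mem _ (Finset.mem_univ a)⟩ :
                {b // b ∈ Finset.image γ.1 Finset.univ}) = b)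
              (fun a => Classical.propDecidable _) Finset.univ
            = @Finset.filter ι (fun a => γ.1 a = b.1)
              (fun a => Classical.propDecidable _) Finset.univ := by
          ext a
          simp only [Finset.mem_filter, Finset.mem_univ, true_and, Subtype.ext_iff]
        exact lt_of_eq_of_lt (Finset.sum_congr hfe fun _ _ => rfl) (γ.2 b.1)⟩⟩
  invFun p := ⟨fun a => (p.2.1 a).1, by
    intro b
    by_cases hb : b ∈ p.1
    · have hfe : @Finset.filter ι (fun a => (p.2.1 a).1 = b)
            (fun a => Classical.propDecidable _) Finset.univ
          = @Finset.filter ι (fun a => p.2.1 a = ⟨b, hb⟩)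
            (fun a => Classical.propDecidable _) Finset.univ := by
        ext a
        simp only [Finset.mem_filter, Finset.mem_univ, true_and, Subtype.ext_iff]
      exact lt_of_eq_of_lt (Finset.sum_congr hfe fun _ _ => rfl) (p.2.2.2 ⟨b, hb⟩)
    · have hfe : @Finset.filter ι (fun a => (p.2.1 a).1 = b)
            (fun a => Classical.propDecidable _) Finset.univ = ∅ := by
        ext a
        simp only [Finset.mem_filter, Finset.mem_univ, true_and, Finset.notMem_empty, iff_false]
        exact fun h => hb (h ▸ (p.2.1 a).2)
      refine lt_of_eq_of_lt (Finset.sum_congr hfe (fun _ _ => rfl)) ?_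
      rw [Finset.sum_empty]
      exact hc⟩
  left_inv γ := Subtype.ext (funext fun a => rfl)
  right_inv p := by
    obtain ⟨T, u⟩ := p
    refine sigma_surj_eq c x _ T ?_ _ u (fun a => rfl)
    ext b
    simp only [Finset.mem_image, Finset.mem_univ, true_and]
    constructor
    · rintro ⟨a, rfl⟩
      exact (u.1 a).2
    · intro hb
      obtain ⟨a, ha⟩ := u.2.1 ⟨b, hb⟩
      exact ⟨a, by rw [ha]⟩

lemma surjSmall_zero (c : ℝ) {ι : Type*} [Fintype ι] (x : ι → ℝ) (h : Nonempty ι) :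
    Nat.card (SurjSmall c x (Fin 0)) = 0 := by
  have : IsEmpty (SurjSmall c x (Fin 0)) := ⟨fun u => (u.1 h.some).elim0⟩
  exact Nat.card_of_isEmpty

lemma card_allSmall_sum (c : ℝ) (hc : 0 < c) {ι : Type*} [Fintype ι] (x : ι → ℝ) (m : ℕ) :
    Nat.card (AllSmall c x (Fin m))
      = ∑ n ∈ Finset.range (m+1), m.choose n * Nat.card (SurjSmall c x (Fin n)) := by
  rw [Nat.card_congr (allSmallEquiv c x hc m), nat_card_sigma]
  have h1 : ∀ T : Finset (Fin m),
      Nat.card (SurjSmall c x {b // b ∈ T}) = Nat.card (SurjSmall c x (Fin T.card)) :=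
    fun T => surjSmall_card_congr c x T.equivFin
  rw [Finset.sum_congr rfl (fun T _ => h1 T)]
  rw [← Finset.sum_fiberwise_of_maps_to (g := Finset.card) (t := Finset.range (m+1))
    (fun T _ => Finset.mem_range.mpr (by
      have := Finset.card_le_univ T
      simp only [Finset.card_univ, Fintype.card_fin] at this
      omega))
    (fun T => Nat.card (SurjSmall c x (Fin T.card)))]
  refine Finset.sum_congr rfl fun n hn => ?_
  have h2 : ∀ T ∈ Finset.univ.filter (fun T : Finset (Fin m) => T.card = n),
      Nat.card (SurjSmall c x (Fin T.card)) = Nat.card (SurjSmall c x (Fin n)) := by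
    intro T hT
    simp only [Finset.mem_filter] at hT
    rw [hT.2]
  rw [Finset.sum_congr rfl h2, Finset.sum_const]
  have h3 : (Finset.univ.filter (fun T : Finset (Fin m) => T.card = n))
      = Finset.powersetCard n (Finset.univ : Finset (Fin m)) := by
    ext T
    simp [Finset.mem_powersetCard, Finset.subset_univ]
  rw [h3, Finset.card_powersetCard, Finset.card_univ, Fintype.card_fin, smul_eq_mul]

lemma allSmall_empty (c : ℝ) (hc : 0 < c) {k m : ℕ} (hm : 0 < m) (x : Fin k → ℝ)
    (hx : (m : ℝ) * c ≤ ∑ i, x i) : IsEmpty (AllSmall c x (Fin m)) := by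
  constructor
  rintro ⟨γ, hs⟩
  have hne : Nonempty (Fin m) := ⟨⟨0, hm⟩⟩
  have h1 := Finset.sum_fiberwise (Finset.univ : Finset (Fin k)) γ x
  have hb : ∀ b : Fin m,
      ∑ a ∈ Finset.univ.filter (fun a => γ a = b), x a < c := by
    intro b
    refine lt_of_eq_of_lt (Finset.sum_congr ?_ fun _ _ => rfl) (hs b)
    ext a
    simp [Finset.mem_filter]
  have h2 : ∑ b : Fin m, ∑ a ∈ Finset.univ.filter (fun a => γ a = b), x a
      < ∑ _b : Fin m, c :=
    Finset.sum_lt_sum_of_nonempty Finset.univ_nonempty (fun b _ => hb b)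
  rw [Finset.sum_const, Finset.card_univ, Fintype.card_fin, nsmul_eq_mul] at h2
  rw [h1] at h2
  linarith

/-- For positive integers `m, k` and `c > 0`: if `x` has dimension `k` and
`|x| ≥ m·c`, then `Σ_{r=1}^{k} (m^r/r!) Σ_{u₁ ⊔ ⋯ ⊔ u_r = x} 𝔏_c(u₁)⋯𝔏_c(u_r) = 0`,
the inner sum being over all `r^k` decompositions of `x` into an ordered `r`-tuple of
possibly empty subvectors (i.e. over all maps `π : Fin k → Fin r`). -/
theorem linnik_decomposition_identity (m k : ℕ) (hm : 0 < m) (hk : 0 < k)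
    (c : ℝ) (hc : 0 < c) (x : Fin k → ℝ) (hx : (m : ℝ) * c ≤ ∑ i, x i) :
    ∑ r ∈ Finset.Icc 1 k, ((m : ℝ) ^ r / (r.factorial : ℝ)) *
      ∑ π : Fin k → Fin r, ∏ i : Fin r,
        LinnikOn c (fun a : {a : Fin k // π a = i} => x a.1) = 0 := by
  have hstep : ∀ r : ℕ,
      ∑ π : Fin k → Fin r, ∏ i : Fin r, LinnikOn c (fun a : {a : Fin k // π a = i} => x a.1)
        = ∑ g ∈ Fintype.piFinset (fun _ : Fin r => Finset.Icc 1 k),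
            (∏ i, cj (g i)) * (Nat.card (SurjSmall c x (Fin (∑ i, g i))) : ℝ) :=
    fun r => inner_sum_linnik c x k (by simp)
  have hstep' : ∑ r ∈ Finset.Icc 1 k, ((m : ℝ) ^ r / (r.factorial : ℝ)) *
      ∑ π : Fin k → Fin r, ∏ i : Fin r,
        LinnikOn c (fun a : {a : Fin k // π a = i} => x a.1)
      = ∑ r ∈ Finset.Icc 1 k, ((m : ℝ) ^ r / (r.factorial : ℝ)) *
          ∑ g ∈ Fintype.piFinset (fun _ : Fin r => Finset.Icc 1 k),
            (∏ i, cj (g i)) * (Nat.card (SurjSmall c x (Fin (∑ i, g i))) : ℝ) :=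
    Finset.sum_congr rfl (fun r _ => by rw [hstep r])
  rw [hstep']
  -- regroup by total n
  have hregroup : ∀ r ∈ Finset.Icc 1 k,
      ∑ g ∈ Fintype.piFinset (fun _ : Fin r => Finset.Icc 1 k),
          (∏ i, cj (g i)) * (Nat.card (SurjSmall c x (Fin (∑ i, g i))) : ℝ)
        = ∑ n ∈ Finset.Icc 1 (k*k),
            Ecomp k n r * (Nat.card (SurjSmall c x (Fin n)) : ℝ) := by
    intro r hr
    simp only [Finset.mem_Icc] at hr
    rw [← Finset.sum_fiberwise_of_maps_to (g := fun g : Fin r → ℕ => ∑ i, g i)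
      (t := Finset.Icc 1 (k*k))
      (fun g hg => by
        simp only [Fintype.mem_piFinset, Finset.mem_Icc] at hg
        simp only [Finset.mem_Icc]
        constructor
        · calc 1 ≤ r := hr.1
          _ = ∑ _i : Fin r, 1 := by simp
          _ ≤ ∑ i, g i := Finset.sum_le_sum (fun i _ => (hg i).1)
        · calc ∑ i, g i ≤ ∑ _i : Fin r, k := Finset.sum_le_sum (fun i _ => (hg i).2)
          _ = r * k := by simp [Finset.sum_const, mul_comm]
          _ ≤ k * k := Nat.mul_le_mul_right k hr.2)
      (fun g => (∏ i, cj (g i)) * (Nat.card (SurjSmall c x (Fin (∑ i, g i))) : ℝ))]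
    refine Finset.sum_congr rfl fun n hn => ?_
    have h4 : ∀ g ∈ (Fintype.piFinset (fun _ : Fin r => Finset.Icc 1 k)).filter
        (fun g => ∑ i, g i = n),
        (∏ i, cj (g i)) * (Nat.card (SurjSmall c x (Fin (∑ i, g i))) : ℝ)
          = (∏ i, cj (g i)) * (Nat.card (SurjSmall c x (Fin n)) : ℝ) := by
      intro g hg
      simp only [Finset.mem_filter] at hg
      rw [hg.2]
    rw [Finset.sum_congr ?_ h4, ← Finset.sum_mul]
    · rfl
    · ext g
      simp only [Finset.mem_filter]
  have hregroup' : ∑ r ∈ Finset.Icc 1 k, ((m : ℝ) ^ r / (r.factorial : ℝ)) *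
          ∑ g ∈ Fintype.piFinset (fun _ : Fin r => Finset.Icc 1 k),
            (∏ i, cj (g i)) * (Nat.card (SurjSmall c x (Fin (∑ i, g i))) : ℝ)
      = ∑ r ∈ Finset.Icc 1 k, ((m : ℝ) ^ r / (r.factorial : ℝ)) *
          ∑ n ∈ Finset.Icc 1 (k*k),
            Ecomp k n r * (Nat.card (SurjSmall c x (Fin n)) : ℝ) :=
    Finset.sum_congr rfl (fun r hr => by rw [hregroup r hr])
  rw [hregroup']
  -- swap sums
  rw [Finset.sum_congr rfl (fun r (_ : r ∈ Finset.Icc 1 k) => Finset.mul_sum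
    (Finset.Icc 1 (k*k)) (fun n => Ecomp k n r * (Nat.card (SurjSmall c x (Fin n)) : ℝ))
    ((m:ℝ)^r / (r.factorial : ℝ))), Finset.sum_comm]
  -- now : ∑ n ∈ Icc 1 (k*k), ∑ r ∈ Icc 1 k, m^r/r! * (Ecomp k n r * S n) = 0
  have hcoef : ∀ n ∈ Finset.Icc 1 k,
      ∑ r ∈ Finset.Icc 1 k, ((m:ℝ)^r / (r.factorial : ℝ)) *
          (Ecomp k n r * (Nat.card (SurjSmall c x (Fin n)) : ℝ))
        = (m.choose n : ℝ) * (Nat.card (SurjSmall c x (Fin n)) : ℝ) := by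
    intro n hn
    simp only [Finset.mem_Icc] at hn
    have e1 : ∀ r ∈ Finset.Icc 1 k,
        ((m:ℝ)^r / (r.factorial : ℝ)) * (Ecomp k n r * (Nat.card (SurjSmall c x (Fin n)) : ℝ))
          = (((m:ℝ)^r / (r.factorial : ℝ)) * Ecomp n n r) *
              (Nat.card (SurjSmall c x (Fin n)) : ℝ) := by
      intro r _
      rw [Ecomp_trunc k n n r hn.2 le_rfl]
      ring
    rw [Finset.sum_congr rfl e1, ← Finset.sum_mul]
    congr 1
    have e2 : ∑ r ∈ Finset.Icc 1 k, ((m:ℝ)^r / (r.factorial : ℝ)) * Ecomp n n r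
        = ∑ r ∈ Finset.Icc 1 n, ((m:ℝ)^r / (r.factorial : ℝ)) * Ecomp n n r := by
      symm
      apply Finset.sum_subset
      · intro r hr'; simp only [Finset.mem_Icc] at *; omega
      · intro r hr1 hr2
        simp only [Finset.mem_Icc] at hr1 hr2
        rw [Ecomp_eq_zero _ _ _ (by omega), mul_zero]
    have e3 : ∑ r ∈ Finset.range (n+1), ((m:ℝ)^r / (r.factorial : ℝ)) * Ecomp n n r
        = ∑ r ∈ Finset.Icc 1 n, ((m:ℝ)^r / (r.factorial : ℝ)) * Ecomp n n r := by
      symm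
      apply Finset.sum_subset
      · intro r hr'; simp only [Finset.mem_Icc, Finset.mem_range] at *; omega
      · intro r hr1 hr2
        simp only [Finset.mem_Icc, Finset.mem_range] at hr1 hr2
        have hr0 : r = 0 := by omega
        subst hr0
        rw [Ecomp_zero, if_neg (by omega), mul_zero]
    rw [e2, ← e3, B_eq_choose m hm n]
  -- restrict the outer sum to Icc 1 k, then compare with the AllSmall count
  have hS0 : ∀ n, k < n → (Nat.card (SurjSmall c x (Fin n)) : ℝ) = 0 := by
    intro n hn
    rw [surjSmall_card_zero c x (by simpa using hn), Nat.cast_zero]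
  have hrestrict : ∑ n ∈ Finset.Icc 1 (k*k), ∑ r ∈ Finset.Icc 1 k,
        ((m:ℝ)^r / (r.factorial : ℝ)) * (Ecomp k n r * (Nat.card (SurjSmall c x (Fin n)) : ℝ))
      = ∑ n ∈ Finset.Icc 1 k, (m.choose n : ℝ) * (Nat.card (SurjSmall c x (Fin n)) : ℝ) := by
    rw [← Finset.sum_subset (Finset.Icc_subset_Icc_right (Nat.le_mul_of_pos_left k hk))
      (fun n hn1 hn2 => ?_)]
    · exact Finset.sum_congr rfl hcoef
    · apply Finset.sum_eq_zero
      intro r _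
      simp only [Finset.mem_Icc] at hn1 hn2
      rw [hS0 n (by omega), mul_zero, mul_zero]
  rw [hrestrict]
  -- final step
  have hfin : ∑ n ∈ Finset.Icc 1 k, (m.choose n : ℝ) * (Nat.card (SurjSmall c x (Fin n)) : ℝ)
      = ∑ n ∈ Finset.range (m+1), (m.choose n : ℝ) * (Nat.card (SurjSmall c x (Fin n)) : ℝ) := by
    have hbig : ∀ (s : Finset ℕ), s ⊆ Finset.range (k+m+2) →
        (∀ n ∈ Finset.range (k+m+2), n ∉ s →
          (m.choose n : ℝ) * (Nat.card (SurjSmall c x (Fin n)) : ℝ) = 0) →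
        ∑ n ∈ s, (m.choose n : ℝ) * (Nat.card (SurjSmall c x (Fin n)) : ℝ)
          = ∑ n ∈ Finset.range (k+m+2), (m.choose n : ℝ) *
              (Nat.card (SurjSmall c x (Fin n)) : ℝ) :=
      fun s hsub hz => Finset.sum_subset hsub hz
    rw [hbig (Finset.Icc 1 k) (fun n hn => by simp only [Finset.mem_Icc, Finset.mem_range] at *; omega)
      (fun n hn1 hn2 => ?_), hbig (Finset.range (m+1))
        (fun n hn => by simp only [Finset.mem_range] at *; omega)
        (fun n hn1 hn2 => ?_)]
    · simp only [Finset.mem_range] at hn1 hn2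
      rw [Nat.choose_eq_zero_of_lt (by omega), Nat.cast_zero, zero_mul]
    · simp only [Finset.mem_Icc, Finset.mem_range] at hn1 hn2
      rcases Nat.eq_zero_or_pos n with h0 | h0
      · subst h0
        rw [surjSmall_zero c x ⟨⟨0, hk⟩⟩, Nat.cast_zero, mul_zero]
      · rw [hS0 n (by omega), mul_zero]
  rw [hfin]
  have hcount := card_allSmall_sum c hc x m
  have hzero : Nat.card (AllSmall c x (Fin m)) = 0 := by
    have := allSmall_empty c hc hm x hx
    exact Nat.card_of_isEmpty
  rw [hzero] at hcount
  calc ∑ n ∈ Finset.range (m+1), (m.choose n : ℝ) * (Nat.card (SurjSmall c x (Fin n)) : ℝ)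
      = ((∑ n ∈ Finset.range (m+1), m.choose n * Nat.card (SurjSmall c x (Fin n)) : ℕ) : ℝ) := by
        push_cast
        rfl
    _ = ((0:ℕ) : ℝ) := by rw [← hcount]
    _ = 0 := by norm_cast
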